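/- The gradient-based contribution function ctrb^g violates the counterfactuality principle (and hence the quantitative counterfactuality principle) with respect to the EB semantics and with respect to the EBT semantics: for each of these two semantics there exist an acyclic QBAG G and arguments a, x ∈ A with σ_G(a) = σ_{G↓(A∖{x})}(a) yet ctrb^g_{G,a}(x) ≠ 0. (A witness is the QBAG with A = {a, b, c}, τ(a) = 0.5, τ(b) = 0, τ(c) = 1, attack (b,a), and support (c,b), where σ_G(b) = 0, so σ_G(a) = 0.5 = σ_{G↓(A∖{b})}(a), while ctrb^g_{G,a}(b) < 0.) -/

import Mathlib

open Finset

/-- A quantitative bipolar argumentation graph (QBAG): a finite set of arguments,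
an initial strength function, and attack and support relations. -/
structure QBAG where
  args : Finset ℕ
  tau : ℕ → ℝ
  att : Finset (ℕ × ℕ)
  supp : Finset (ℕ × ℕ)

namespace QBAG

/-- The edge relation of the underlying directed graph (attack or support). -/
def edge (G : QBAG) (x y : ℕ) : Prop := (x, y) ∈ G.att ∨ (x, y) ∈ G.supp

/-- Well-formedness: edges live on the arguments, attack and support are disjoint,
and initial strengths lie in [0,1]. -/
def WF (G : QBAG) : Prop :=
  (∀ p ∈ G.att, p.1 ∈ G.args ∧ p.2 ∈ G.args) ∧
  (∀ p ∈ G.supp, p.1 ∈ G.args ∧ p.2 ∈ G.args) ∧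
  Disjoint G.att G.supp ∧
  (∀ a ∈ G.args, G.tau a ∈ Set.Icc (0 : ℝ) 1)

/-- Acyclicity of the directed graph (A, Att ∪ Supp). -/
def Acyclic (G : QBAG) : Prop := ∀ x, ¬ Relation.TransGen G.edge x x

/-- Direct attackers of an argument. -/
def attackers (G : QBAG) (a : ℕ) : Finset ℕ :=
  (G.att.filter (fun p => p.2 = a)).image Prod.fst

/-- Direct supporters of an argument. -/
def supporters (G : QBAG) (a : ℕ) : Finset ℕ :=
  (G.supp.filter (fun p => p.2 = a)).image Prod.fst

/-- Restriction G↓S of a QBAG to a subset S of the arguments. -/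
def restrict (G : QBAG) (S : Finset ℕ) : QBAG where
  args := G.args ∩ S
  tau := G.tau
  att := G.att.filter (fun p => p.1 ∈ S ∧ p.2 ∈ S)
  supp := G.supp.filter (fun p => p.1 ∈ S ∧ p.2 ∈ S)

/-- G⁻: the QBAG G with every attack and support edge pointing into x removed. -/
def dropInto (G : QBAG) (x : ℕ) : QBAG where
  args := G.args
  tau := G.tau
  att := G.att.filter (fun p => p.2 ≠ x)
  supp := G.supp.filter (fun p => p.2 ≠ x)

/-- G[x←ε]: the QBAG G with the initial strength of x replaced by ε. -/
def setTau (G : QBAG) (x : ℕ) (ε : ℝ) : QBAG where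
  args := G.args
  tau := Function.update G.tau x ε
  att := G.att
  supp := G.supp

end QBAG

noncomputable section

/-- Sum aggregation. -/
def sumAgg (G : QBAG) (s : ℕ → ℝ) (a : ℕ) : ℝ :=
  (∑ y ∈ G.supporters a, s y) - (∑ y ∈ G.attackers a, s y)

/-- Product aggregation. -/
def prodAgg (G : QBAG) (s : ℕ → ℝ) (a : ℕ) : ℝ :=
  (∏ y ∈ G.attackers a, (1 - s y)) - (∏ y ∈ G.supporters a, (1 - s y))

/-- Top aggregation. -/
def topAgg (G : QBAG) (s : ℕ → ℝ) (a : ℕ) : ℝ :=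
  (G.supporters a).fold max 0 s - (G.attackers a).fold max 0 s

/-- h for the 2-Max(1) influence function. -/
def h2 (x : ℝ) : ℝ := max 0 x ^ 2 / (1 + max 0 x ^ 2)

/-- h for the 1-Max(1) influence function. -/
def h1 (x : ℝ) : ℝ := max 0 x / (1 + max 0 x)

/-- 2-Max(1) influence function (used by QE). -/
def iotaQE (w s : ℝ) : ℝ := w - w * h2 (-s) + (1 - w) * h2 s

/-- Linear(1) influence function (used by DFQuAD). -/
def iotaLin (w s : ℝ) : ℝ := w - w * max 0 (-s) + (1 - w) * max 0 s

/-- 1-Max(1) influence function (used by SD-DFQuAD). -/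
def iotaSD (w s : ℝ) : ℝ := w - w * h1 (-s) + (1 - w) * h1 s

/-- Euler-based influence function (used by EB and EBT). -/
def iotaEB (w s : ℝ) : ℝ := 1 - (1 - w ^ 2) / (1 + w * Real.exp s)

/-- σ is a modular semantics with aggregation `agg` and influence `iota`:
on every well-formed acyclic QBAG the final strengths satisfy the defining equations. -/
def IsSemantics (agg : QBAG → (ℕ → ℝ) → ℕ → ℝ) (iota : ℝ → ℝ → ℝ)
    (σ : QBAG → ℕ → ℝ) : Prop :=
  ∀ G : QBAG, G.WF → G.Acyclic → ∀ a ∈ G.args, σ G a = iota (G.tau a) (agg G (σ G) a)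

/-- QE semantics. -/
def IsQE (σ : QBAG → ℕ → ℝ) : Prop := IsSemantics sumAgg iotaQE σ

/-- DFQuAD semantics. -/
def IsDF (σ : QBAG → ℕ → ℝ) : Prop := IsSemantics prodAgg iotaLin σ

/-- SD-DFQuAD semantics. -/
def IsSD (σ : QBAG → ℕ → ℝ) : Prop := IsSemantics prodAgg iotaSD σ

/-- EB semantics. -/
def IsEB (σ : QBAG → ℕ → ℝ) : Prop := IsSemantics sumAgg iotaEB σ

/-- EBT semantics. -/
def IsEBT (σ : QBAG → ℕ → ℝ) : Prop := IsSemantics topAgg iotaEB σ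

/-- A gradual semantics assigns final strengths in [0,1] on acyclic QBAGs. -/
def IsGradualSemantics (σ : QBAG → ℕ → ℝ) : Prop :=
  ∀ G : QBAG, G.WF → G.Acyclic → ∀ a ∈ G.args, σ G a ∈ Set.Icc (0 : ℝ) 1

/-- Removal-based contribution: ctrb^r_{G,a}(x) = σ_G(a) − σ_{G↓(A∖{x})}(a). -/
def ctrbR (σ : QBAG → ℕ → ℝ) (G : QBAG) (a x : ℕ) : ℝ :=
  σ G a - σ (G.restrict (G.args.erase x)) a

/-- Intrinsic-removal contribution: ctrb^{ri}_{G,a}(x) = σ_{G⁻}(a) − σ_{G↓(A∖{x})}(a). -/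
def ctrbRI (σ : QBAG → ℕ → ℝ) (G : QBAG) (a x : ℕ) : ℝ :=
  σ (G.dropInto x) a - σ (G.restrict (G.args.erase x)) a

/-- Shapley-based contribution. -/
def ctrbS (σ : QBAG → ℕ → ℝ) (G : QBAG) (a x : ℕ) : ℝ :=
  ∑ X ∈ ((G.args.erase a).erase x).powerset,
    ((X.card.factorial : ℝ) * ((G.args.erase a).card - X.card - 1).factorial /
      (G.args.erase a).card.factorial) *
    (σ (G.restrict (G.args \ X)) a - σ (G.restrict (G.args \ insert x X)) a)

/-- Gradient-based contribution: the derivative at ε = τ(x) (within [0,1]) of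
the map ε ↦ σ_{G[x←ε]}(a). -/
def ctrbG (σ : QBAG → ℕ → ℝ) (G : QBAG) (a x : ℕ) : ℝ :=
  derivWithin (fun ε => σ (G.setTau x ε) a) (Set.Icc (0 : ℝ) 1) (G.tau x)

/-- The contribution existence principle. -/
def ContributionExistence (ctrb : QBAG → ℕ → ℕ → ℝ) (σ : QBAG → ℕ → ℝ) : Prop :=
  ∀ G : QBAG, G.WF → G.Acyclic → ∀ a ∈ G.args,
    σ G a ≠ G.tau a → ∃ x ∈ G.args, x ≠ a ∧ ctrb G a x ≠ 0

/-- The quantitative contribution existence principle. -/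
def QuantContributionExistence (ctrb : QBAG → ℕ → ℕ → ℝ) (σ : QBAG → ℕ → ℝ) : Prop :=
  ∀ G : QBAG, G.WF → G.Acyclic → ∀ a ∈ G.args,
    ∑ x ∈ G.args.erase a, ctrb G a x = σ G a - G.tau a

/-- The strong faithfulness principle. -/
def StrongFaithfulness (ctrb : QBAG → ℕ → ℕ → ℝ) (σ : QBAG → ℕ → ℝ) : Prop :=
  ∀ G : QBAG, G.WF → G.Acyclic → ∀ a ∈ G.args, ∀ x ∈ G.args,
    ∀ ε ∈ Set.Icc (0 : ℝ) 1,
      (ctrb G a x < 0 →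
        (ε < G.tau x → σ G a < σ (G.setTau x ε) a) ∧
        (ε > G.tau x → σ G a > σ (G.setTau x ε) a)) ∧
      (ctrb G a x = 0 → σ G a = σ (G.setTau x ε) a) ∧
      (ctrb G a x > 0 →
        (ε < G.tau x → σ G a > σ (G.setTau x ε) a) ∧
        (ε > G.tau x → σ G a < σ (G.setTau x ε) a))

/-- The local faithfulness principle. -/
def LocalFaithfulness (ctrb : QBAG → ℕ → ℕ → ℝ) (σ : QBAG → ℕ → ℝ) : Prop :=
  ∀ G : QBAG, G.WF → G.Acyclic → ∀ a ∈ G.args, ∀ x ∈ G.args,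
    ∃ δ > 0, ∀ ε ∈ Set.Icc (G.tau x - δ) (G.tau x + δ) ∩ Set.Icc (0 : ℝ) 1,
      (ctrb G a x < 0 →
        (ε < G.tau x → σ G a < σ (G.setTau x ε) a) ∧
        (ε > G.tau x → σ G a > σ (G.setTau x ε) a)) ∧
      (ctrb G a x > 0 →
        (ε < G.tau x → σ G a > σ (G.setTau x ε) a) ∧
        (ε > G.tau x → σ G a < σ (G.setTau x ε) a))

/-- The quantitative local faithfulness principle: the map ε ↦ σ_{G[x←ε]}(a) is
differentiable (within [0,1]) at τ(x) with derivative ctrb_{G,a}(x); equivalently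
σ_{G[x←τ(x)+ε]}(a) = σ_G(a) + ε·ctrb_{G,a}(x) + e(ε) with e(ε)/ε → 0. -/
def QuantLocalFaithfulness (ctrb : QBAG → ℕ → ℕ → ℝ) (σ : QBAG → ℕ → ℝ) : Prop :=
  ∀ G : QBAG, G.WF → G.Acyclic → ∀ a ∈ G.args, ∀ x ∈ G.args,
    HasDerivWithinAt (fun ε => σ (G.setTau x ε) a) (ctrb G a x)
      (Set.Icc (0 : ℝ) 1) (G.tau x)

/-- The counterfactuality principle. -/
def Counterfactuality (ctrb : QBAG → ℕ → ℕ → ℝ) (σ : QBAG → ℕ → ℝ) : Prop :=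
  ∀ G : QBAG, G.WF → G.Acyclic → ∀ a ∈ G.args, ∀ x ∈ G.args,
    (ctrb G a x < 0 → σ G a < σ (G.restrict (G.args.erase x)) a) ∧
    (ctrb G a x = 0 → σ G a = σ (G.restrict (G.args.erase x)) a) ∧
    (ctrb G a x > 0 → σ G a > σ (G.restrict (G.args.erase x)) a)

/-- The quantitative counterfactuality principle. -/
def QuantCounterfactuality (ctrb : QBAG → ℕ → ℕ → ℝ) (σ : QBAG → ℕ → ℝ) : Prop :=
  ∀ G : QBAG, G.WF → G.Acyclic → ∀ a ∈ G.args, ∀ x ∈ G.args,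
    ctrb G a x = σ G a - σ (G.restrict (G.args.erase x)) a

end

section CtrbGWitness

open Set

/-- The witness QBAG: arguments a=0, b=1, c=2 with τ(a)=1/2, τ(b)=0, τ(c)=1,
attack (b,a) and support (c,b). -/
noncomputable def Gw : QBAG where
  args := {0, 1, 2}
  tau := fun n => if n = 0 then 1/2 else if n = 1 then 0 else 1
  att := {(1, 0)}
  supp := {(2, 1)}

lemma Gw_WF : Gw.WF := by
  refine ⟨by decide, by decide, by decide, ?_⟩
  intro a ha
  fin_cases ha <;> norm_num [Gw, Set.mem_Icc]

lemma Gw_edge_lt {x y : ℕ} (h : Gw.edge x y) : y < x := by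
  rcases h with h | h <;> simp [Gw, QBAG.edge, Prod.ext_iff] at h <;> omega

lemma Gw_acyclic : Gw.Acyclic := by
  intro x hx
  have key : ∀ y, Relation.TransGen Gw.edge x y → y < x := by
    intro y hy
    induction hy with
    | single h => exact Gw_edge_lt h
    | tail _ h ih => exact lt_trans (Gw_edge_lt h) ih
  exact absurd (key x hx) (lt_irrefl x)

lemma setTau_WF {ε : ℝ} (hε : ε ∈ Set.Icc (0:ℝ) 1) : (Gw.setTau 1 ε).WF := by
  refine ⟨(by decide : ∀ p ∈ Gw.att, p.1 ∈ Gw.args ∧ p.2 ∈ Gw.args),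
    (by decide : ∀ p ∈ Gw.supp, p.1 ∈ Gw.args ∧ p.2 ∈ Gw.args),
    (by decide : Disjoint Gw.att Gw.supp), ?_⟩
  intro a ha
  fin_cases ha
  · norm_num [QBAG.setTau, Function.update, Gw, Set.mem_Icc]
  · simpa [QBAG.setTau, Function.update] using hε
  · norm_num [QBAG.setTau, Function.update, Gw, Set.mem_Icc]

lemma setTau_acyclic (ε : ℝ) : (Gw.setTau 1 ε).Acyclic := Gw_acyclic

/-- Inner final strength of b as a function of ε. -/
noncomputable def gF (ε : ℝ) : ℝ := 1 - (1 - ε ^ 2) / (1 + ε * Real.exp 1)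

/-- Final strength of a as a function of ε. -/
noncomputable def FF (ε : ℝ) : ℝ := 1 - (3/4) / (1 + (1/2) * Real.exp (-(gF ε)))

lemma gF_nonneg {ε : ℝ} (hε : ε ∈ Set.Icc (0:ℝ) 1) : 0 ≤ gF ε := by
  have he : (0:ℝ) < Real.exp 1 := Real.exp_pos 1
  have h0 := hε.1
  have hden : (0:ℝ) < 1 + ε * Real.exp 1 := by nlinarith
  have hle : (1 - ε ^ 2) / (1 + ε * Real.exp 1) ≤ 1 := by
    rw [div_le_one hden]; nlinarith
  simp only [gF]; linarith

lemma sig_setTau {σ : QBAG → ℕ → ℝ} (hσ : IsEB σ ∨ IsEBT σ)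
    {ε : ℝ} (hε : ε ∈ Set.Icc (0:ℝ) 1) :
    σ (Gw.setTau 1 ε) 0 = FF ε := by
  have hWF := setTau_WF hε
  have hAc := setTau_acyclic ε
  have hA0 : (Gw.setTau 1 ε).attackers 0 = {1} := (by decide : Gw.attackers 0 = {1})
  have hS0 : (Gw.setTau 1 ε).supporters 0 = ∅ := (by decide : Gw.supporters 0 = ∅)
  have hA1 : (Gw.setTau 1 ε).attackers 1 = ∅ := (by decide : Gw.attackers 1 = ∅)
  have hS1 : (Gw.setTau 1 ε).supporters 1 = {2} := (by decide : Gw.supporters 1 = {2})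
  have hA2 : (Gw.setTau 1 ε).attackers 2 = ∅ := (by decide : Gw.attackers 2 = ∅)
  have hS2 : (Gw.setTau 1 ε).supporters 2 = ∅ := (by decide : Gw.supporters 2 = ∅)
  have hmem : ∀ n, n ∈ Gw.args → n ∈ (Gw.setTau 1 ε).args := fun n h => h
  have ht0 : (Gw.setTau 1 ε).tau 0 = 1/2 := by
    simp [QBAG.setTau, Function.update, Gw]
  have ht1 : (Gw.setTau 1 ε).tau 1 = ε := by
    simp [QBAG.setTau, Function.update]
  have ht2 : (Gw.setTau 1 ε).tau 2 = 1 := by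
    simp [QBAG.setTau, Function.update, Gw]
  rcases hσ with hσ | hσ
  · -- EB semantics
    have h2 : σ (Gw.setTau 1 ε) 2 = 1 := by
      rw [hσ _ hWF hAc 2 (hmem 2 (by decide))]
      rw [ht2]; simp [sumAgg, hA2, hS2, iotaEB]
    have h1 : σ (Gw.setTau 1 ε) 1 = gF ε := by
      rw [hσ _ hWF hAc 1 (hmem 1 (by decide))]
      rw [ht1]
      simp [sumAgg, hA1, hS1, h2, iotaEB, gF]
    rw [hσ _ hWF hAc 0 (hmem 0 (by decide))]
    rw [ht0]
    simp only [sumAgg, hA0, hS0, Finset.sum_empty, Finset.sum_singleton, h1]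
    norm_num [iotaEB, FF]
  · -- EBT semantics
    have h2 : σ (Gw.setTau 1 ε) 2 = 1 := by
      rw [hσ _ hWF hAc 2 (hmem 2 (by decide))]
      rw [ht2]; simp [topAgg, hA2, hS2, iotaEB]
    have h1 : σ (Gw.setTau 1 ε) 1 = gF ε := by
      rw [hσ _ hWF hAc 1 (hmem 1 (by decide))]
      rw [ht1]
      simp only [topAgg, hA1, hS1, Finset.fold_empty, Finset.fold_singleton, h2]
      norm_num [iotaEB, gF]
    rw [hσ _ hWF hAc 0 (hmem 0 (by decide))]
    rw [ht0]
    simp only [topAgg, hA0, hS0, Finset.fold_empty, Finset.fold_singleton, h1,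
      max_eq_left (gF_nonneg hε)]
    norm_num [iotaEB, FF]

lemma setTau_zero_eq : Gw.setTau 1 0 = Gw := by
  show QBAG.mk Gw.args (Function.update Gw.tau 1 0) Gw.att Gw.supp = Gw
  have h : Function.update Gw.tau 1 0 = Gw.tau := by
    rw [show (0:ℝ) = Gw.tau 1 from rfl]
    exact Function.update_eq_self 1 Gw.tau
  rw [h]

lemma FF_zero : FF 0 = 1/2 := by
  have hg : gF 0 = 0 := by norm_num [gF]
  norm_num [FF, hg]

lemma sig_Gw {σ : QBAG → ℕ → ℝ} (hσ : IsEB σ ∨ IsEBT σ) : σ Gw 0 = 1/2 := by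
  have := sig_setTau hσ (ε := 0) ⟨le_refl 0, zero_le_one⟩
  rw [setTau_zero_eq, FF_zero] at this
  exact this

/-- The restricted graph. -/
noncomputable def Gr : QBAG := Gw.restrict (Gw.args.erase 1)

lemma Gr_WF : Gr.WF := by
  refine ⟨by decide, by decide, by decide, ?_⟩
  intro a ha
  have hargs : Gr.args = {0, 2} := by decide
  rw [hargs] at ha
  fin_cases ha <;> norm_num [Gr, QBAG.restrict, Gw, Set.mem_Icc]

lemma Gr_noEdge {x y : ℕ} : ¬ Gr.edge x y := by
  intro h
  have ha : Gr.att = ∅ := by decide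
  have hs : Gr.supp = ∅ := by decide
  rcases h with h | h
  · rw [ha] at h; exact absurd h (Finset.notMem_empty _)
  · rw [hs] at h; exact absurd h (Finset.notMem_empty _)

lemma Gr_acyclic : Gr.Acyclic := by
  intro x hx
  cases hx with
  | single h => exact Gr_noEdge h
  | tail _ h => exact Gr_noEdge h

lemma sig_Gr {σ : QBAG → ℕ → ℝ} (hσ : IsEB σ ∨ IsEBT σ) : σ Gr 0 = 1/2 := by
  have hA0 : Gr.attackers 0 = ∅ := by decide
  have hS0 : Gr.supporters 0 = ∅ := by decide
  have ht0 : Gr.tau 0 = 1/2 := by norm_num [Gr, QBAG.restrict, Gw]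
  have h0 : (0:ℕ) ∈ Gr.args := by decide
  rcases hσ with hσ | hσ
  · rw [hσ _ Gr_WF Gr_acyclic 0 h0, ht0]
    norm_num [sumAgg, hA0, hS0, iotaEB]
  · rw [hσ _ Gr_WF Gr_acyclic 0 h0, ht0]
    norm_num [topAgg, hA0, hS0, iotaEB]

lemma FF_hasDerivAt : HasDerivAt FF (-(Real.exp 1)/6) 0 := by
  have hu : HasDerivAt (fun ε : ℝ => 1 - ε ^ 2) (0:ℝ) 0 := by
    simpa using (hasDerivAt_pow 2 (0:ℝ)).const_sub 1
  have hv : HasDerivAt (fun ε : ℝ => 1 + ε * Real.exp 1) (Real.exp 1) 0 := by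
    simpa using ((hasDerivAt_id (0:ℝ)).mul_const (Real.exp 1)).const_add 1
  have hg : HasDerivAt gF (Real.exp 1) 0 := by
    have h := (hu.div hv (by norm_num)).const_sub 1
    exact h.congr_deriv (by norm_num)
  have hg0 : gF 0 = 0 := by norm_num [gF]
  have hexp : HasDerivAt (fun ε : ℝ => Real.exp (-(gF ε))) (-(Real.exp 1)) 0 := by
    have h := hg.neg.exp
    simpa [hg0] using h
  have hd : HasDerivAt (fun ε : ℝ => 1 + (1/2) * Real.exp (-(gF ε)))
      (-(Real.exp 1)/2) 0 := by
    have h := (hexp.const_mul (1/2 : ℝ)).const_add 1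
    exact h.congr_deriv (by ring)
  have hne : (1 : ℝ) + (1/2) * Real.exp (-(gF 0)) ≠ 0 := by
    norm_num [hg0]
  have hinv : HasDerivAt (fun ε : ℝ => (1 + (1/2) * Real.exp (-(gF ε)))⁻¹)
      (2 * Real.exp 1 / 9) 0 := by
    have h := hd.inv hne
    exact h.congr_deriv (by rw [hg0, neg_zero, Real.exp_zero]; ring)
  have h := (hinv.const_mul (3/4 : ℝ)).const_sub 1
  have hFF : FF = fun x => 1 - 3/4 * (1 + 1/2 * Real.exp (-(gF x)))⁻¹ := by
    funext x
    rw [FF, div_eq_mul_inv]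
  rw [hFF]
  exact h.congr_deriv (by ring)

lemma ctrbG_val {σ : QBAG → ℕ → ℝ} (hσ : IsEB σ ∨ IsEBT σ) :
    ctrbG σ Gw 0 1 = -(Real.exp 1)/6 := by
  have hEq : Set.EqOn (fun ε => σ (Gw.setTau 1 ε) 0) FF (Set.Icc (0:ℝ) 1) :=
    fun ε hε => sig_setTau hσ hε
  have h0mem : (0:ℝ) ∈ Set.Icc (0:ℝ) 1 := ⟨le_refl 0, zero_le_one⟩
  have ht1 : Gw.tau 1 = 0 := rfl
  unfold ctrbG
  rw [ht1, derivWithin_congr hEq (hEq h0mem)]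
  exact FF_hasDerivAt.hasDerivWithinAt.derivWithin
    ((uniqueDiffOn_Icc one_pos) 0 h0mem)

end CtrbGWitness

/-- The gradient-based contribution function violates counterfactuality
(and hence quantitative counterfactuality) w.r.t. the EB semantics and w.r.t. the EBT
semantics: there exist an acyclic QBAG G and a, x ∈ A with
σ_G(a) = σ_{G↓(A∖{x})}(a) yet ctrb^g_{G,a}(x) ≠ 0. -/
theorem ctrbG_violates_counterfactuality_EB_EBT :
    ∀ σ : QBAG → ℕ → ℝ, (IsEB σ ∨ IsEBT σ) →
      ¬ Counterfactuality (ctrbG σ) σ ∧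
      ¬ QuantCounterfactuality (ctrbG σ) σ ∧
      ∃ G : QBAG, G.WF ∧ G.Acyclic ∧ ∃ a ∈ G.args, ∃ x ∈ G.args,
        σ G a = σ (G.restrict (G.args.erase x)) a ∧ ctrbG σ G a x ≠ 0 := by
  intro σ hσ
  have hGw : σ Gw 0 = 1/2 := sig_Gw hσ
  have hGr : σ (Gw.restrict (Gw.args.erase 1)) 0 = 1/2 := sig_Gr hσ
  have hEq : σ Gw 0 = σ (Gw.restrict (Gw.args.erase 1)) 0 := by rw [hGw, hGr]
  have hC : ctrbG σ Gw 0 1 = -(Real.exp 1)/6 := ctrbG_val hσ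
  have hCneg : ctrbG σ Gw 0 1 < 0 := by
    rw [hC]; have := Real.exp_pos 1; linarith
  refine ⟨?_, ?_, Gw, Gw_WF, Gw_acyclic, 0, by decide, 1, by decide, hEq, ne_of_lt hCneg⟩
  · intro hc
    have h := (hc Gw Gw_WF Gw_acyclic 0 (by decide) 1 (by decide)).1 hCneg
    rw [hEq] at h
    exact lt_irrefl _ h
  · intro hq
    have h := hq Gw Gw_WF Gw_acyclic 0 (by decide) 1 (by decide)
    rw [hEq] at h
    simp at h
    exact (ne_of_lt hCneg) h
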